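/- arXiv:2411.11028 — 3 statements merged into one kernel-verified Lean document; each statement's English description precedes it below -/
import Mathlib

section
/- Let m and n be positive natural numbers, let Γ, Γ̄ ∈ ℂ^{m×n} be arbitrary complex matrices, and let Ω, Ω̄ ∈ ℂ^{m×m} be Hermitian positive definite. Then log det(I + Ω^{-1}ΓΓ^H) ≥ log det(I + Ω̄^{-1}Γ̄Γ̄^H) − Tr(Ω̄^{-1}Γ̄Γ̄^H) + 2·Re Tr(Ω̄^{-1}Γ̄Γ^H) − Re Tr((Ω̄^{-1} − (Γ̄Γ̄^H + Ω̄)^{-1})^H (ΓΓ^H + Ω)). (This is the quadratic concave minorizer of the log-determinant rate function used in the majorization–minimization step; it is Lemma 2 of the paper.) -/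
open Matrix
open scoped ComplexOrder

namespace LogDetAux


lemma trace_eq_sum_eigenvalues {k : ℕ} {A : Matrix (Fin k) (Fin k) ℂ} (hA : A.IsHermitian) :
    A.trace = ∑ i, (hA.eigenvalues i : ℂ) := by
  conv_lhs => rw [hA.spectral_theorem]
  rw [Unitary.conjStarAlgAut_apply, Matrix.trace_mul_comm, ← Matrix.mul_assoc, Unitary.coe_star_mul_self, Matrix.one_mul]
  simp [Matrix.trace_diagonal]

lemma det_re_pos {k : ℕ} {A : Matrix (Fin k) (Fin k) ℂ} (hA : A.PosDef) :
    0 < A.det.re := by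
  have := hA.det_pos
  rw [Complex.lt_def] at this
  simpa using this.1

lemma det_im_zero {k : ℕ} {A : Matrix (Fin k) (Fin k) ℂ} (hA : A.PosDef) :
    A.det.im = 0 := by
  have := hA.det_pos
  rw [Complex.lt_def] at this
  simpa using this.2.symm

lemma det_eq_coe_re {k : ℕ} {A : Matrix (Fin k) (Fin k) ℂ} (hA : A.PosDef) :
    A.det = (A.det.re : ℂ) :=
  Complex.ext (by simp) (by simp [det_im_zero hA])

lemma log_det_re_le {k : ℕ} {A : Matrix (Fin k) (Fin k) ℂ} (hA : A.PosDef) :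
    Real.log A.det.re ≤ A.trace.re - k := by
  have hH := hA.isHermitian
  have hpos : ∀ i, 0 < hH.eigenvalues i := hA.eigenvalues_pos
  have hdet : A.det.re = ∏ i, hH.eigenvalues i := by
    rw [hH.det_eq_prod_eigenvalues]
    norm_cast
  have htr : A.trace.re = ∑ i, hH.eigenvalues i := by
    rw [trace_eq_sum_eigenvalues hH]
    norm_cast
  rw [hdet, htr, Real.log_prod (fun i _ => (hpos i).ne')]
  have : ∑ i, Real.log (hH.eigenvalues i) ≤ ∑ i, (hH.eigenvalues i - 1) :=
    Finset.sum_le_sum fun i _ => Real.log_le_sub_one_of_pos (hpos i)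
  simpa [Finset.sum_sub_distrib] using this




lemma posDef_conj {k : ℕ} {A B : Matrix (Fin k) (Fin k) ℂ} (hA : A.PosDef)
    (hB : IsUnit B.det) : (Bᴴ * A * B).PosDef := by
  refine Matrix.PosDef.of_dotProduct_mulVec_pos (Matrix.isHermitian_conjTranspose_mul_mul B hA.1) fun x hx => ?_
  have hinj := Matrix.mulVec_injective_iff_isUnit.mpr ((Matrix.isUnit_iff_isUnit_det B).mpr hB)
  have hBx : B *ᵥ x ≠ 0 := fun h => hx (hinj (by simpa using h))
  simpa only [star_mulVec, dotProduct_mulVec, vecMul_vecMul] using hA.dotProduct_mulVec_pos hBx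

lemma trace_re_nonneg_of_posSemidef {k : ℕ} {A : Matrix (Fin k) (Fin k) ℂ}
    (hA : A.PosSemidef) : 0 ≤ A.trace.re := by
  have h : ∀ i, 0 ≤ (A i i).re := by
    intro i
    have := hA.re_dotProduct_nonneg (Pi.single i 1)
    simpa [Matrix.mulVec_single, dotProduct, Pi.single_apply] using this
  have : 0 ≤ ∑ i, (A i i).re := Finset.sum_nonneg fun i _ => h i
  simpa [Matrix.trace, Matrix.diag, Complex.re_sum] using this

lemma trace_mul_re_nonneg {k : ℕ} {F P : Matrix (Fin k) (Fin k) ℂ}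
    (hF : F.PosSemidef) (hP : P.PosSemidef) : 0 ≤ ((F * P).trace).re := by
  open scoped MatrixOrder in
  obtain ⟨X, hX⟩ := CStarAlgebra.nonneg_iff_eq_star_mul_self.mp hP.nonneg
  have h1 : (F * P).trace = (X * F * Xᴴ).trace := by
    rw [hX, star_eq_conjTranspose, ← Matrix.mul_assoc, Matrix.trace_mul_comm, ← Matrix.mul_assoc]
  rw [h1]
  exact trace_re_nonneg_of_posSemidef (hF.mul_mul_conjTranspose_same X)




lemma log_det_re_le_rel {k : ℕ} {A B : Matrix (Fin k) (Fin k) ℂ}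
    (hA : A.PosDef) (hB : B.PosDef) :
    Real.log A.det.re ≤ Real.log B.det.re + ((B⁻¹ * A).trace).re - k := by
  have hBi : (B⁻¹).PosDef := hB.inv
  open scoped MatrixOrder in
  set R := CFC.sqrt (B⁻¹) with hRdef
  open scoped MatrixOrder in
  have hRR : R * R = B⁻¹ := CFC.sqrt_mul_sqrt_self _ hBi.posSemidef.nonneg
  open scoped MatrixOrder in
  have hRH : Rᴴ = R := (CFC.sqrt_nonneg _).posSemidef.isHermitian
  have hBdet : B.det ≠ 0 := ne_of_gt hB.det_pos
  have hBidet : (B⁻¹).det ≠ 0 := by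
    rw [Matrix.det_nonsing_inv, Ring.inverse_eq_inv']
    exact inv_ne_zero hBdet
  have hRdet : IsUnit R.det := by
    have h : R.det * R.det = (B⁻¹).det := by rw [← Matrix.det_mul, hRR]
    refine isUnit_iff_ne_zero.mpr (fun h0 => hBidet ?_)
    rw [← h, h0, zero_mul]
  have hM : (R * A * R).PosDef := by
    have := posDef_conj hA hRdet
    rwa [hRH] at this
  have h1 := log_det_re_le hM
  have hdet : (R * A * R).det = (B⁻¹).det * A.det := by
    rw [Matrix.det_mul, Matrix.det_mul, ← hRR, Matrix.det_mul]
    ring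
  have htrace : (R * A * R).trace = (B⁻¹ * A).trace := by
    rw [Matrix.trace_mul_comm, ← Matrix.mul_assoc, hRR]
  -- numeric bookkeeping
  have hBinvdet : (B⁻¹).det = ((B.det.re)⁻¹ : ℝ) := by
    rw [Matrix.det_nonsing_inv, Ring.inverse_eq_inv', det_eq_coe_re hB]
    norm_cast
  have hAdet : A.det = (A.det.re : ℂ) := det_eq_coe_re hA
  have hdet_re : (R * A * R).det.re = (B.det.re)⁻¹ * A.det.re := by
    rw [hdet, hBinvdet, hAdet]
    norm_cast
  rw [hdet_re, htrace] at h1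
  have hApos := det_re_pos hA
  have hBpos := det_re_pos hB
  rw [Real.log_mul (inv_ne_zero (ne_of_gt hBpos)) (ne_of_gt hApos), Real.log_inv] at h1
  linarith


end LogDetAux

set_option maxHeartbeats 1600000 in
/-- **Lemma 2 of the paper.** Quadratic concave minorizer of the log-det rate function:
for arbitrary complex matrices `Γ, Γ̄ ∈ ℂ^{m×n}` and Hermitian positive definite
`Ω, Ω̄ ∈ ℂ^{m×m}`,
`log det(I + Ω⁻¹ΓΓᴴ) ≥ log det(I + Ω̄⁻¹Γ̄Γ̄ᴴ) − Tr(Ω̄⁻¹Γ̄Γ̄ᴴ) + 2 Re Tr(Ω̄⁻¹Γ̄Γᴴ)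
  − Re Tr((Ω̄⁻¹ − (Γ̄Γ̄ᴴ + Ω̄)⁻¹)ᴴ (ΓΓᴴ + Ω))`. -/
theorem logdet_quadratic_minorizer {m n : ℕ} (hm : 0 < m) (hn : 0 < n)
    (Γ Γbar : Matrix (Fin m) (Fin n) ℂ)
    (Ω Ωbar : Matrix (Fin m) (Fin m) ℂ)
    (hΩ : Ω.PosDef) (hΩbar : Ωbar.PosDef) :
    Real.log ((1 + Ω⁻¹ * (Γ * Γᴴ)).det.re) ≥
      Real.log ((1 + Ωbar⁻¹ * (Γbar * Γbarᴴ)).det.re)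
        - ((Ωbar⁻¹ * (Γbar * Γbarᴴ)).trace).re
        + 2 * ((Ωbar⁻¹ * (Γbar * Γᴴ)).trace).re
        - (((Ωbar⁻¹ - (Γbar * Γbarᴴ + Ωbar)⁻¹)ᴴ * (Γ * Γᴴ + Ω)).trace).re := by
  classical
  set S : Matrix (Fin m) (Fin m) ℂ := Γ * Γᴴ + Ω with hSdef
  set Sb : Matrix (Fin m) (Fin m) ℂ := Γbar * Γbarᴴ + Ωbar with hSbdef
  have hS : S.PosDef := Matrix.PosDef.posSemidef_add
    (Matrix.posSemidef_self_mul_conjTranspose Γ) hΩ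
  have hSb : Sb.PosDef := Matrix.PosDef.posSemidef_add
    (Matrix.posSemidef_self_mul_conjTranspose Γbar) hΩbar
  have hΩd : IsUnit Ω.det := isUnit_iff_ne_zero.mpr (ne_of_gt hΩ.det_pos)
  have hΩbd : IsUnit Ωbar.det := isUnit_iff_ne_zero.mpr (ne_of_gt hΩbar.det_pos)
  have hSd : IsUnit S.det := isUnit_iff_ne_zero.mpr (ne_of_gt hS.det_pos)
  have hSbd : IsUnit Sb.det := isUnit_iff_ne_zero.mpr (ne_of_gt hSb.det_pos)
  have cancel : ∀ (M : Matrix (Fin m) (Fin m) ℂ), IsUnit M.det →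
      ∀ (p : Type) (X : Matrix (Fin m) p ℂ), M * (M⁻¹ * X) = X ∧ M⁻¹ * (M * X) = X := by
    intro M hM p X
    constructor <;> rw [← Matrix.mul_assoc]
    · rw [Matrix.mul_nonsing_inv _ hM, Matrix.one_mul]
    · rw [Matrix.nonsing_inv_mul _ hM, Matrix.one_mul]
  have cΩ := fun (p : Type) (X : Matrix (Fin m) p ℂ) => (cancel Ω hΩd p X).1
  have cΩb := fun (p : Type) (X : Matrix (Fin m) p ℂ) => (cancel Ωbar hΩbd p X).1
  have cΩbi := fun (p : Type) (X : Matrix (Fin m) p ℂ) => (cancel Ωbar hΩbd p X).2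
  have cS := fun (p : Type) (X : Matrix (Fin m) p ℂ) => (cancel S hSd p X).1
  have cSi := fun (p : Type) (X : Matrix (Fin m) p ℂ) => (cancel S hSd p X).2
  have hΩbc : Ωbar * Ωbar⁻¹ = 1 := Matrix.mul_nonsing_inv _ hΩbd
  have hΩbc' : Ωbar⁻¹ * Ωbar = 1 := Matrix.nonsing_inv_mul _ hΩbd
  have hSbc : Sb * Sb⁻¹ = 1 := Matrix.mul_nonsing_inv _ hSbd
  have hSinvH : (S⁻¹)ᴴ = S⁻¹ := hS.isHermitian.inv
  have hSbinvH : (Sb⁻¹)ᴴ = Sb⁻¹ := hSb.isHermitian.inv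
  have hΩinvH : (Ω⁻¹)ᴴ = Ω⁻¹ := hΩ.isHermitian.inv
  have hΩbinvH : (Ωbar⁻¹)ᴴ = Ωbar⁻¹ := hΩbar.isHermitian.inv
  -- facts relating S, Sb bodies
  have hggS : Γ * Γᴴ = S - Ω := by rw [hSdef]; abel
  have hggSb : Γbar * Γbarᴴ = Sb - Ωbar := by rw [hSbdef]; abel
  clear_value S Sb
  -- positive definiteness of the n×n matrices
  have hG : (1 + Γᴴ * (Ω⁻¹ * Γ)).PosDef := by
    have h := (hΩ.inv.posSemidef).conjTranspose_mul_mul_same Γ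
    rw [Matrix.mul_assoc] at h
    exact Matrix.PosDef.add_posSemidef Matrix.PosDef.one h
  have hF : (1 + Γbarᴴ * (Ωbar⁻¹ * Γbar)).PosDef := by
    have h := (hΩbar.inv.posSemidef).conjTranspose_mul_mul_same Γbar
    rw [Matrix.mul_assoc] at h
    exact Matrix.PosDef.add_posSemidef Matrix.PosDef.one h
  have hGd : IsUnit (1 + Γᴴ * (Ω⁻¹ * Γ)).det := isUnit_iff_ne_zero.mpr (ne_of_gt hG.det_pos)
  have hFd : IsUnit (1 + Γbarᴴ * (Ωbar⁻¹ * Γbar)).det := isUnit_iff_ne_zero.mpr (ne_of_gt hF.det_pos)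
  -- inverse of G
  have hSmul : S * (Ω⁻¹ * Γ) = Γ * (Γᴴ * (Ω⁻¹ * Γ)) + Γ := by
    rw [hSdef, Matrix.add_mul, cΩ, Matrix.mul_assoc]
  have key : S⁻¹ * (Γ * (Γᴴ * (Ω⁻¹ * Γ))) = Ω⁻¹ * Γ - S⁻¹ * Γ := by
    have h1 : Γ * (Γᴴ * (Ω⁻¹ * Γ)) = S * (Ω⁻¹ * Γ) - Γ := by rw [hSmul]; abel
    rw [h1, Matrix.mul_sub, cSi]
  have hEG : (1 - Γᴴ * (S⁻¹ * Γ)) * (1 + Γᴴ * (Ω⁻¹ * Γ)) = 1 := by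
    simp only [Matrix.sub_mul, Matrix.mul_add, Matrix.one_mul, Matrix.mul_one, Matrix.mul_assoc]
    rw [key, Matrix.mul_sub]
    abel
  have hGinv : (1 + Γᴴ * (Ω⁻¹ * Γ))⁻¹ = 1 - Γᴴ * (S⁻¹ * Γ) := Matrix.inv_eq_left_inv hEG
  -- the quadratic surrogate matrix and PSD difference
  have hVSV : (1 - Γbarᴴ * (Sb⁻¹ * Γ) - Γᴴ * (Sb⁻¹ * Γbar)
        + Γbarᴴ * (Sb⁻¹ * (S * (Sb⁻¹ * Γbar)))) - (1 - Γᴴ * (S⁻¹ * Γ)) =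
      (Γbarᴴ * Sb⁻¹ - Γᴴ * S⁻¹) * (S * (Sb⁻¹ * Γbar - S⁻¹ * Γ)) := by
    simp only [Matrix.sub_mul, Matrix.mul_sub, Matrix.mul_assoc, cS, cSi]
    abel
  have hPSD : ((Γbarᴴ * Sb⁻¹ - Γᴴ * S⁻¹) * (S * (Sb⁻¹ * Γbar - S⁻¹ * Γ))).PosSemidef := by
    have h := hS.posSemidef.conjTranspose_mul_mul_same (Sb⁻¹ * Γbar - S⁻¹ * Γ)
    rw [Matrix.conjTranspose_sub, Matrix.conjTranspose_mul, Matrix.conjTranspose_mul,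
      hSinvH, hSbinvH, Matrix.mul_assoc] at h
    exact h
  -- key product identities
  have hgg : Γbar * (Γbarᴴ * Sb⁻¹) = 1 - Ωbar * Sb⁻¹ := by
    rw [← Matrix.mul_assoc, hggSb, Matrix.sub_mul, hSbc]
  have h1 : Ωbar⁻¹ * (Γbar * (Γbarᴴ * Sb⁻¹)) = Ωbar⁻¹ - Sb⁻¹ := by
    rw [hgg, Matrix.mul_sub, Matrix.mul_one, ← Matrix.mul_assoc, hΩbc', Matrix.one_mul]
  have hFUH : (1 + Γbarᴴ * (Ωbar⁻¹ * Γbar)) * (Γbarᴴ * Sb⁻¹) = Γbarᴴ * Ωbar⁻¹ := by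
    simp only [Matrix.add_mul, Matrix.one_mul, Matrix.mul_assoc]
    rw [h1, Matrix.mul_sub]
    abel
  have hUF : (Sb⁻¹ * Γbar) * (1 + Γbarᴴ * (Ωbar⁻¹ * Γbar)) = Ωbar⁻¹ * Γbar := by
    have h := congrArg Matrix.conjTranspose hFUH
    simp only [Matrix.conjTranspose_mul, Matrix.conjTranspose_add, Matrix.conjTranspose_one,
      Matrix.conjTranspose_conjTranspose, hSbinvH, hΩbinvH] at h
    simp only [Matrix.mul_assoc] at h ⊢
    exact h
  -- trace computations
  have T1 : (1 + Γbarᴴ * (Ωbar⁻¹ * Γbar)).trace = (n : ℂ) + (Ωbar⁻¹ * (Γbar * Γbarᴴ)).trace := by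
    rw [Matrix.trace_add, Matrix.trace_one, Matrix.trace_mul_comm, Matrix.mul_assoc]
    simp
  have T2 : ((1 + Γbarᴴ * (Ωbar⁻¹ * Γbar)) * (Γbarᴴ * (Sb⁻¹ * Γ))).trace
      = (Ωbar⁻¹ * (Γ * Γbarᴴ)).trace := by
    rw [show Γbarᴴ * (Sb⁻¹ * Γ) = (Γbarᴴ * Sb⁻¹) * Γ from (Matrix.mul_assoc _ _ _).symm,
      ← Matrix.mul_assoc, hFUH, Matrix.trace_mul_comm, ← Matrix.mul_assoc,
      Matrix.trace_mul_comm]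
  have T3 : ((1 + Γbarᴴ * (Ωbar⁻¹ * Γbar)) * (Γᴴ * (Sb⁻¹ * Γbar))).trace
      = (Ωbar⁻¹ * (Γbar * Γᴴ)).trace := by
    rw [Matrix.trace_mul_comm, Matrix.mul_assoc, hUF, Matrix.trace_mul_comm, Matrix.mul_assoc]
  have T4 : ((1 + Γbarᴴ * (Ωbar⁻¹ * Γbar)) * (Γbarᴴ * (Sb⁻¹ * (S * (Sb⁻¹ * Γbar))))).trace
      = ((Ωbar⁻¹ - Sb⁻¹) * S).trace := by
    rw [show Γbarᴴ * (Sb⁻¹ * (S * (Sb⁻¹ * Γbar))) = (Γbarᴴ * Sb⁻¹) * (S * (Sb⁻¹ * Γbar)) from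
        (Matrix.mul_assoc _ _ _).symm,
      ← Matrix.mul_assoc, hFUH, Matrix.mul_assoc, Matrix.trace_mul_comm]
    simp only [Matrix.mul_assoc]
    rw [hggSb, Matrix.mul_sub Sb⁻¹, Matrix.nonsing_inv_mul _ hSbd, Matrix.mul_sub S,
      Matrix.mul_one, Matrix.mul_sub Ωbar⁻¹, Matrix.trace_sub, Matrix.sub_mul, Matrix.trace_sub]
    congr 1
    rw [Matrix.trace_mul_comm]
    simp only [Matrix.mul_assoc]
    rw [hΩbc, Matrix.mul_one, Matrix.trace_mul_comm]
  -- assemble the trace identity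
  have expand : ((1 + Γbarᴴ * (Ωbar⁻¹ * Γbar)) * (1 - Γbarᴴ * (Sb⁻¹ * Γ) - Γᴴ * (Sb⁻¹ * Γbar)
        + Γbarᴴ * (Sb⁻¹ * (S * (Sb⁻¹ * Γbar))))).trace
      = (n : ℂ) + (Ωbar⁻¹ * (Γbar * Γbarᴴ)).trace - (Ωbar⁻¹ * (Γ * Γbarᴴ)).trace
        - (Ωbar⁻¹ * (Γbar * Γᴴ)).trace + ((Ωbar⁻¹ - Sb⁻¹) * S).trace := by
    rw [Matrix.mul_add, Matrix.mul_sub, Matrix.mul_sub, Matrix.mul_one,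
      Matrix.trace_add, Matrix.trace_sub, Matrix.trace_sub, T1, T2, T3, T4]
  -- conjugate trace relation
  have hconj : (Ωbar⁻¹ * (Γ * Γbarᴴ)).trace = star ((Ωbar⁻¹ * (Γbar * Γᴴ)).trace) := by
    rw [← Matrix.trace_conjTranspose, Matrix.conjTranspose_mul, Matrix.conjTranspose_mul,
      Matrix.conjTranspose_conjTranspose, hΩbinvH, Matrix.trace_mul_comm, Matrix.mul_assoc]
  -- main inequality from the relative log-det bound
  have hrel := LogDetAux.log_det_re_le_rel (hA := hG.inv) (hB := hF.inv)
  rw [Matrix.nonsing_inv_nonsing_inv _ hFd] at hrel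
  have hGiRe : ((1 + Γᴴ * (Ω⁻¹ * Γ))⁻¹).det.re = ((1 + Γᴴ * (Ω⁻¹ * Γ)).det.re)⁻¹ := by
    rw [Matrix.det_nonsing_inv, Ring.inverse_eq_inv']
    conv_lhs => rw [LogDetAux.det_eq_coe_re hG]
    rw [← Complex.ofReal_inv, Complex.ofReal_re]
  have hFiRe : ((1 + Γbarᴴ * (Ωbar⁻¹ * Γbar))⁻¹).det.re
      = ((1 + Γbarᴴ * (Ωbar⁻¹ * Γbar)).det.re)⁻¹ := by
    rw [Matrix.det_nonsing_inv, Ring.inverse_eq_inv']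
    conv_lhs => rw [LogDetAux.det_eq_coe_re hF]
    rw [← Complex.ofReal_inv, Complex.ofReal_re]
  rw [hGiRe, hFiRe, Real.log_inv, Real.log_inv] at hrel
  -- trace monotonicity
  have htr_le : (((1 + Γbarᴴ * (Ωbar⁻¹ * Γbar)) * (1 + Γᴴ * (Ω⁻¹ * Γ))⁻¹).trace).re
      ≤ (((1 + Γbarᴴ * (Ωbar⁻¹ * Γbar)) * (1 - Γbarᴴ * (Sb⁻¹ * Γ) - Γᴴ * (Sb⁻¹ * Γbar)
        + Γbarᴴ * (Sb⁻¹ * (S * (Sb⁻¹ * Γbar))))).trace).re := by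
    have h0 := LogDetAux.trace_mul_re_nonneg hF.posSemidef (hVSV ▸ hPSD)
    rw [Matrix.mul_sub, Matrix.trace_sub] at h0
    simp only [Complex.sub_re] at h0
    rw [hGinv]
    linarith
  -- rewrite goal determinants
  have hdetG : (1 + Ω⁻¹ * (Γ * Γᴴ)).det = (1 + Γᴴ * (Ω⁻¹ * Γ)).det := by
    rw [← Matrix.mul_assoc, Matrix.det_one_add_mul_comm]
  have hdetF : (1 + Ωbar⁻¹ * (Γbar * Γbarᴴ)).det = (1 + Γbarᴴ * (Ωbar⁻¹ * Γbar)).det := by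
    rw [← Matrix.mul_assoc, Matrix.det_one_add_mul_comm]
  rw [ge_iff_le, hdetG, hdetF,
    show (Ωbar⁻¹ - Sb⁻¹)ᴴ = Ωbar⁻¹ - Sb⁻¹ by rw [Matrix.conjTranspose_sub, hΩbinvH, hSbinvH]]
  -- take real parts of the trace identity
  have expand_re := congrArg Complex.re expand
  rw [hconj] at expand_re
  simp only [Complex.add_re, Complex.sub_re, Complex.natCast_re, Complex.star_def,
    Complex.conj_re] at expand_re
  rw [expand_re] at htr_le
  linarith
end

section
/- Let m and n be positive natural numbers, let Γ, Γ̄ ∈ ℂ^{m×n} be arbitrary complex matrices, and let Ω, Ω̄ ∈ ℂ^{m×m} be Hermitian positive definite. Then Tr(Ω^{-1}ΓΓ^H) ≥ 2·Re Tr(Ω̄^{-1}Γ̄Γ^H) − Re Tr(Ω̄^{-1}Γ̄Γ̄^H Ω̄^{-1} Ω), where both sides are real numbers. (This is the linear minorizer, at the reference point (Γ̄, Ω̄), of the jointly convex matrix-fractional function f(Γ, Ω) = Tr(Ω^{-1}ΓΓ^H); it is Lemma 3 of the paper.) -/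
open Matrix
open scoped ComplexOrder

private lemma trace_mul_conjTranspose_self_re_nonneg {k l : ℕ}
    (B : Matrix (Fin k) (Fin l) ℂ) : 0 ≤ ((B * Bᴴ).trace).re := by
  rw [Matrix.trace]
  simp only [Matrix.diag, Matrix.mul_apply, Matrix.conjTranspose_apply]
  rw [Complex.re_sum]
  refine Finset.sum_nonneg fun i _ => ?_
  rw [Complex.re_sum]
  refine Finset.sum_nonneg fun j _ => ?_
  rw [RCLike.star_def, Complex.mul_conj]
  simpa using Complex.normSq_nonneg (B i j)

/-- **Lemma 3 of the paper.** Linear minorizer of the jointly convex matrix-fractional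
function `f(Γ, Ω) = Tr(Ω⁻¹ΓΓᴴ)`: for arbitrary `Γ, Γ̄ ∈ ℂ^{m×n}` and Hermitian positive
definite `Ω, Ω̄ ∈ ℂ^{m×m}`,
`Tr(Ω⁻¹ΓΓᴴ) ≥ 2 Re Tr(Ω̄⁻¹Γ̄Γᴴ) − Re Tr(Ω̄⁻¹Γ̄Γ̄ᴴΩ̄⁻¹Ω)`. -/
theorem trace_fractional_linear_minorizer {m n : ℕ} (hm : 0 < m) (hn : 0 < n)
    (Γ Γbar : Matrix (Fin m) (Fin n) ℂ)
    (Ω Ωbar : Matrix (Fin m) (Fin m) ℂ)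
    (hΩ : Ω.PosDef) (hΩbar : Ωbar.PosDef) :
    ((Ω⁻¹ * (Γ * Γᴴ)).trace).re ≥
      2 * ((Ωbar⁻¹ * (Γbar * Γᴴ)).trace).re
        - ((Ωbar⁻¹ * (Γbar * Γbarᴴ) * Ωbar⁻¹ * Ω).trace).re := by
  have hΩu : IsUnit Ω.det := hΩ.det_pos.ne'.isUnit
  have hΩinv : Ω⁻¹ * Ω = 1 := Matrix.nonsing_inv_mul Ω hΩu
  have hΩH : Ωᴴ = Ω := hΩ.isHermitian
  have hAH : (Ωbar⁻¹)ᴴ = Ωbar⁻¹ := hΩbar.isHermitian.inv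
  have hinv : (Ω⁻¹).PosDef := hΩ.inv
  open scoped MatrixOrder in
  set S := CFC.sqrt (Ω⁻¹) with hS
  open scoped MatrixOrder in
  have hSS : S * S = Ω⁻¹ := CFC.sqrt_mul_sqrt_self _ hinv.posSemidef.nonneg
  open scoped MatrixOrder in
  have hSH : Sᴴ = S := (CFC.sqrt_nonneg (Ω⁻¹)).posSemidef.isHermitian
  set M := Γ - Ω * (Ωbar⁻¹ * Γbar) with hM
  -- nonnegativity of the key trace
  have key : 0 ≤ ((Ω⁻¹ * (M * Mᴴ)).trace).re := by
    have h1 : (Ω⁻¹ * (M * Mᴴ)).trace = ((S * M) * (S * M)ᴴ).trace := by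
      rw [Matrix.conjTranspose_mul, hSH]
      rw [Matrix.trace_mul_comm (S * M)]
      rw [Matrix.trace_mul_comm (Ω⁻¹)]
      rw [← hSS]
      simp only [Matrix.mul_assoc]
      rw [Matrix.trace_mul_comm M]
      simp [Matrix.mul_assoc]
    rw [h1]
    exact trace_mul_conjTranspose_self_re_nonneg (S * M)
  -- expansion of the trace
  have expand : (Ω⁻¹ * (M * Mᴴ)).trace
      = (Ω⁻¹ * (Γ * Γᴴ)).trace - star ((Ωbar⁻¹ * (Γbar * Γᴴ)).trace)
        - (Ωbar⁻¹ * (Γbar * Γᴴ)).trace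
        + (Ωbar⁻¹ * (Γbar * Γbarᴴ) * Ωbar⁻¹ * Ω).trace := by
    have hMH : Mᴴ = Γᴴ - Γbarᴴ * (Ωbar⁻¹ * Ω) := by
      rw [hM, Matrix.conjTranspose_sub, Matrix.conjTranspose_mul,
        Matrix.conjTranspose_mul, hΩH, hAH, Matrix.mul_assoc]
    rw [hM, hMH]
    have e1 : (Γ - Ω * (Ωbar⁻¹ * Γbar)) * (Γᴴ - Γbarᴴ * (Ωbar⁻¹ * Ω))
        = Γ * Γᴴ - Γ * (Γbarᴴ * (Ωbar⁻¹ * Ω)) - Ω * (Ωbar⁻¹ * Γbar) * Γᴴ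
          + Ω * (Ωbar⁻¹ * Γbar) * (Γbarᴴ * (Ωbar⁻¹ * Ω)) := by
      rw [Matrix.sub_mul, Matrix.mul_sub, Matrix.mul_sub]
      abel
    rw [e1]
    rw [Matrix.mul_add, Matrix.mul_sub, Matrix.mul_sub, Matrix.trace_add,
      Matrix.trace_sub, Matrix.trace_sub]
    have t2 : (Ω⁻¹ * (Γ * (Γbarᴴ * (Ωbar⁻¹ * Ω)))).trace
        = star ((Ωbar⁻¹ * (Γbar * Γᴴ)).trace) := by
      have h : Ω⁻¹ * (Γ * (Γbarᴴ * (Ωbar⁻¹ * Ω)))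
          = (Ω⁻¹ * (Γ * (Γbarᴴ * Ωbar⁻¹))) * Ω := by
        simp [Matrix.mul_assoc]
      rw [h, Matrix.trace_mul_comm, ← Matrix.mul_assoc,
        Matrix.mul_nonsing_inv Ω hΩu, Matrix.one_mul,
        ← Matrix.trace_conjTranspose]
      congr 1
      simp [Matrix.conjTranspose_mul, hAH, Matrix.mul_assoc]
    have t3 : (Ω⁻¹ * (Ω * (Ωbar⁻¹ * Γbar) * Γᴴ)).trace
        = (Ωbar⁻¹ * (Γbar * Γᴴ)).trace := by
      congr 1
      simp only [Matrix.mul_assoc]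
      rw [← Matrix.mul_assoc Ω⁻¹ Ω, hΩinv, Matrix.one_mul]
    have t4 : (Ω⁻¹ * (Ω * (Ωbar⁻¹ * Γbar) * (Γbarᴴ * (Ωbar⁻¹ * Ω)))).trace
        = (Ωbar⁻¹ * (Γbar * Γbarᴴ) * Ωbar⁻¹ * Ω).trace := by
      congr 1
      simp only [Matrix.mul_assoc]
      rw [← Matrix.mul_assoc Ω⁻¹ Ω, hΩinv, Matrix.one_mul]
    rw [t2, t3, t4]
  have hre := congrArg Complex.re expand
  simp only [Complex.sub_re, Complex.add_re, Complex.conj_re, RCLike.star_def] at hre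
  rw [hre] at key
  linarith
end

section
/- (Corollary 1, inequality (32): surrogate for the common finite-blocklength rate with fixed precoders and variable channels.) Fix precoders {W̄} = {W̄_i, W̄_{ij}} and reference channels {H̄_{lk,i}}. Assume σ² > 0, n > 0, q_c ≥ 0, N_u ≤ N_BS, and, for the pair (l,k) considered, ζ̄_{c,lk} := 2 Tr(S̄_{c,lk}(S̄_{c,lk} + D̄_{c,lk})^{-1}) > 0, where barred quantities S̄, D̄ are evaluated at ({H̄}, {W̄}). Then for every choice of channel matrices {H_{lk,i}} ⊂ ℂ^{N_u×N_BS} (in particular those induced by any feasible RIS coefficients), with S_{c,lk}, D_{c,lk}, r_{c,lk} evaluated at ({H}, {W̄}): r_{c,lk} ≥ a_{c,lk} + 2 Σ_{i=1}^{L} Σ_{j=1}^{K} Re Tr(A_{c,lk,ij} W̄_{ij}^H H_{lk,i}^H) + 2 Σ_{i=1}^{L} Re Tr(A_{c,lk,i} W̄_{i}^H H_{lk,i}^H) − Re Tr(B_{c,lk} (H_{lk,l}W̄_{l}W̄_{l}^H H_{lk,l}^H + D_{c,lk})), where a_{c,lk} = log det(I + D̄_{c,lk}^{-1} S̄_{c,lk})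 − Tr(D̄_{c,lk}^{-1} S̄_{c,lk}) − (q_c/(2√n))·(√(ζ̄_{c,lk}) + 2 N_u/√(ζ̄_{c,lk})); A_{c,lk,ij} = (q_c/√(n·ζ̄_{c,lk})) · (S̄_{c,lk} + D̄_{c,lk})^{-1} H̄_{lk,i} W̄_{ij} for all (i,j); A_{c,lk,i} = D̄_{c,lk}^{-1} H̄_{lk,l} W̄_{l} if i = l, and A_{c,lk,i} = (q_c/√(n·ζ̄_{c,lk})) · (S̄_{c,lk} + D̄_{c,lk})^{-1} H̄_{lk,i} W̄_{i} otherwise; and B_{c,lk} = D̄_{c,lk}^{-1} − (S̄_{c,lk} + D̄_{c,lk})^{-1} + (q_c/√(n·ζ̄_{c,lk})) · (S̄_{c,lk} + D̄_{c,lk})^{-1} D̄_{c,lk} (S̄_{c,lk} + D̄_{c,lk})^{-1}. (The paper's constant I = min(N_BS, N_u) equals N_u under the assumption N_u ≤ N_BS.) -/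
open Matrix Finset
open scoped ComplexOrder

noncomputable section RSMA

variable {L K Nu NBS : ℕ}

/-- Transmit covariance `C_i = W_iW_iᴴ + Σ_j W_{ij}W_{ij}ᴴ` of base station `i`. -/
def Cmat (Wc : Fin L → Matrix (Fin NBS) (Fin NBS) ℂ)
    (Wp : Fin L → Fin K → Matrix (Fin NBS) (Fin NBS) ℂ) (i : Fin L) :
    Matrix (Fin NBS) (Fin NBS) ℂ :=
  Wc i * (Wc i)ᴴ + ∑ j : Fin K, Wp i j * (Wp i j)ᴴ

/-- Private-signal covariance `S_{lk} = H_{lk,l}W_{lk}(H_{lk,l}W_{lk})ᴴ`. -/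
def Smat (H : Fin L → Fin K → Fin L → Matrix (Fin Nu) (Fin NBS) ℂ)
    (Wp : Fin L → Fin K → Matrix (Fin NBS) (Fin NBS) ℂ)
    (l : Fin L) (k : Fin K) : Matrix (Fin Nu) (Fin Nu) ℂ :=
  (H l k l * Wp l k) * (H l k l * Wp l k)ᴴ

/-- Common-signal covariance `S_{c,lk} = H_{lk,l}W_{l}(H_{lk,l}W_{l})ᴴ`. -/
def Scmat (H : Fin L → Fin K → Fin L → Matrix (Fin Nu) (Fin NBS) ℂ)
    (Wc : Fin L → Matrix (Fin NBS) (Fin NBS) ℂ)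
    (l : Fin L) (k : Fin K) : Matrix (Fin Nu) (Fin Nu) ℂ :=
  (H l k l * Wc l) * (H l k l * Wc l)ᴴ

/-- Interference-plus-noise covariance
`D_{lk} = σ²I + Σ_{j≠k} H_{lk,l}W_{lj}(H_{lk,l}W_{lj})ᴴ + Σ_{i≠l} H_{lk,i}C_iH_{lk,i}ᴴ`. -/
def Dmat (σ2 : ℝ) (H : Fin L → Fin K → Fin L → Matrix (Fin Nu) (Fin NBS) ℂ)
    (Wc : Fin L → Matrix (Fin NBS) (Fin NBS) ℂ)
    (Wp : Fin L → Fin K → Matrix (Fin NBS) (Fin NBS) ℂ)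
    (l : Fin L) (k : Fin K) : Matrix (Fin Nu) (Fin Nu) ℂ :=
  (σ2 : ℂ) • (1 : Matrix (Fin Nu) (Fin Nu) ℂ)
    + ∑ j ∈ Finset.univ.erase k, (H l k l * Wp l j) * (H l k l * Wp l j)ᴴ
    + ∑ i ∈ Finset.univ.erase l, H l k i * Cmat Wc Wp i * (H l k i)ᴴ

/-- `D_{c,lk} = D_{lk} + S_{lk}`. -/
def Dcmat (σ2 : ℝ) (H : Fin L → Fin K → Fin L → Matrix (Fin Nu) (Fin NBS) ℂ)
    (Wc : Fin L → Matrix (Fin NBS) (Fin NBS) ℂ)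
    (Wp : Fin L → Fin K → Matrix (Fin NBS) (Fin NBS) ℂ)
    (l : Fin L) (k : Fin K) : Matrix (Fin Nu) (Fin Nu) ℂ :=
  Dmat σ2 H Wc Wp l k + Smat H Wp l k

/-- Channel dispersion of the private message: `ζ'_{lk} = 2 Tr(S_{lk} D_{c,lk}⁻¹)`. -/
def zetaP (σ2 : ℝ) (H : Fin L → Fin K → Fin L → Matrix (Fin Nu) (Fin NBS) ℂ)
    (Wc : Fin L → Matrix (Fin NBS) (Fin NBS) ℂ)
    (Wp : Fin L → Fin K → Matrix (Fin NBS) (Fin NBS) ℂ)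
    (l : Fin L) (k : Fin K) : ℝ :=
  2 * ((Smat H Wp l k * (Dcmat σ2 H Wc Wp l k)⁻¹).trace).re

/-- Channel dispersion of the common message:
`ζ_{c,lk} = 2 Tr(S_{c,lk}(S_{c,lk} + D_{c,lk})⁻¹)`. -/
def zetaC (σ2 : ℝ) (H : Fin L → Fin K → Fin L → Matrix (Fin Nu) (Fin NBS) ℂ)
    (Wc : Fin L → Matrix (Fin NBS) (Fin NBS) ℂ)
    (Wp : Fin L → Fin K → Matrix (Fin NBS) (Fin NBS) ℂ)
    (l : Fin L) (k : Fin K) : ℝ :=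
  2 * ((Scmat H Wc l k * (Scmat H Wc l k + Dcmat σ2 H Wc Wp l k)⁻¹).trace).re

/-- Finite-blocklength private rate
`r_{p,lk} = log det(I + D_{lk}⁻¹S_{lk}) − q_p √(2Tr(S_{lk}D_{c,lk}⁻¹)/n)`. -/
def rpRate (σ2 nn qp : ℝ) (H : Fin L → Fin K → Fin L → Matrix (Fin Nu) (Fin NBS) ℂ)
    (Wc : Fin L → Matrix (Fin NBS) (Fin NBS) ℂ)
    (Wp : Fin L → Fin K → Matrix (Fin NBS) (Fin NBS) ℂ)
    (l : Fin L) (k : Fin K) : ℝ :=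
  Real.log ((1 + (Dmat σ2 H Wc Wp l k)⁻¹ * Smat H Wp l k).det.re)
    - qp * Real.sqrt (zetaP σ2 H Wc Wp l k / nn)

/-- Finite-blocklength common rate
`r_{c,lk} = log det(I + D_{c,lk}⁻¹S_{c,lk}) − q_c √(2Tr(S_{c,lk}(S_{c,lk}+D_{c,lk})⁻¹)/n)`. -/
def rcRate (σ2 nn qc : ℝ) (H : Fin L → Fin K → Fin L → Matrix (Fin Nu) (Fin NBS) ℂ)
    (Wc : Fin L → Matrix (Fin NBS) (Fin NBS) ℂ)
    (Wp : Fin L → Fin K → Matrix (Fin NBS) (Fin NBS) ℂ)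
    (l : Fin L) (k : Fin K) : ℝ :=
  Real.log ((1 + (Dcmat σ2 H Wc Wp l k)⁻¹ * Scmat H Wc l k).det.re)
    - qc * Real.sqrt (zetaC σ2 H Wc Wp l k / nn)

/-- Constant term `a_{c,lk}` of the common-rate surrogate (evaluated at the
reference precoders). -/
def aC (σ2 nn qc : ℝ) (H : Fin L → Fin K → Fin L → Matrix (Fin Nu) (Fin NBS) ℂ)
    (Wc : Fin L → Matrix (Fin NBS) (Fin NBS) ℂ)
    (Wp : Fin L → Fin K → Matrix (Fin NBS) (Fin NBS) ℂ)
    (l : Fin L) (k : Fin K) : ℝ :=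
  Real.log ((1 + (Dcmat σ2 H Wc Wp l k)⁻¹ * Scmat H Wc l k).det.re)
    - (((Dcmat σ2 H Wc Wp l k)⁻¹ * Scmat H Wc l k).trace).re
    - qc / (2 * Real.sqrt nn) *
        (Real.sqrt (zetaC σ2 H Wc Wp l k)
          + 2 * (Nu : ℝ) / Real.sqrt (zetaC σ2 H Wc Wp l k))

/-- Linear coefficient `A_{c,lk,ij}` of the common-rate surrogate. -/
def AcIJ (σ2 nn qc : ℝ) (H : Fin L → Fin K → Fin L → Matrix (Fin Nu) (Fin NBS) ℂ)
    (Wc : Fin L → Matrix (Fin NBS) (Fin NBS) ℂ)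
    (Wp : Fin L → Fin K → Matrix (Fin NBS) (Fin NBS) ℂ)
    (l : Fin L) (k : Fin K) (i : Fin L) (j : Fin K) : Matrix (Fin Nu) (Fin NBS) ℂ :=
  ((qc / Real.sqrt (nn * zetaC σ2 H Wc Wp l k) : ℝ) : ℂ) •
    ((Scmat H Wc l k + Dcmat σ2 H Wc Wp l k)⁻¹ * H l k i * Wp i j)

/-- Linear coefficient `A_{c,lk,i}` of the common-rate surrogate. -/
def AcI (σ2 nn qc : ℝ) (H : Fin L → Fin K → Fin L → Matrix (Fin Nu) (Fin NBS) ℂ)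
    (Wc : Fin L → Matrix (Fin NBS) (Fin NBS) ℂ)
    (Wp : Fin L → Fin K → Matrix (Fin NBS) (Fin NBS) ℂ)
    (l : Fin L) (k : Fin K) (i : Fin L) : Matrix (Fin Nu) (Fin NBS) ℂ :=
  if i = l then (Dcmat σ2 H Wc Wp l k)⁻¹ * H l k l * Wc l
  else ((qc / Real.sqrt (nn * zetaC σ2 H Wc Wp l k) : ℝ) : ℂ) •
    ((Scmat H Wc l k + Dcmat σ2 H Wc Wp l k)⁻¹ * H l k i * Wc i)

/-- Quadratic coefficient `B_{c,lk}` of the common-rate surrogate. -/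
def Bc (σ2 nn qc : ℝ) (H : Fin L → Fin K → Fin L → Matrix (Fin Nu) (Fin NBS) ℂ)
    (Wc : Fin L → Matrix (Fin NBS) (Fin NBS) ℂ)
    (Wp : Fin L → Fin K → Matrix (Fin NBS) (Fin NBS) ℂ)
    (l : Fin L) (k : Fin K) : Matrix (Fin Nu) (Fin Nu) ℂ :=
  (Dcmat σ2 H Wc Wp l k)⁻¹ - (Scmat H Wc l k + Dcmat σ2 H Wc Wp l k)⁻¹
    + ((qc / Real.sqrt (nn * zetaC σ2 H Wc Wp l k) : ℝ) : ℂ) •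
        ((Scmat H Wc l k + Dcmat σ2 H Wc Wp l k)⁻¹ * Dcmat σ2 H Wc Wp l k *
          (Scmat H Wc l k + Dcmat σ2 H Wc Wp l k)⁻¹)


set_option linter.unusedSectionVars false
set_option maxHeartbeats 1000000

namespace RSMAAux

variable {n m p : Type*} [Fintype n] [Fintype m] [Fintype p]
  [DecidableEq n] [DecidableEq m] [DecidableEq p]

open scoped MatrixOrder

lemma re_nonneg_of_nonneg {z : ℂ} (h : 0 ≤ z) : 0 ≤ z.re := by
  rw [Complex.le_def] at h; simpa using h.1

lemma trace_re_nonneg {A : Matrix n n ℂ} (hA : A.PosSemidef) : 0 ≤ A.trace.re := by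
  rw [Matrix.trace]
  rw [Complex.re_sum]
  refine Finset.sum_nonneg fun i _ => ?_
  have := hA.re_dotProduct_nonneg (Pi.single i 1)
  simpa [dotProduct, Pi.single_apply, Matrix.mulVec, Finset.sum_ite_eq,
    apply_ite] using this

lemma trace_mul_re_nonneg {A B : Matrix n n ℂ} (hA : A.PosSemidef) (hB : B.PosSemidef) :
    0 ≤ (A * B).trace.re := by
  have h1 : A * B = A * (CFC.sqrt B * CFC.sqrt B) := by
    rw [CFC.sqrt_mul_sqrt_self B hB.nonneg]
  have h2 : ((A * (CFC.sqrt B * CFC.sqrt B)).trace) = (CFC.sqrt B * A * (CFC.sqrt B)ᴴ).trace := by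
    rw [(CFC.sqrt_nonneg B).posSemidef.isHermitian.eq]
    rw [← Matrix.mul_assoc, Matrix.trace_mul_comm, ← Matrix.mul_assoc]
  rw [h1, h2]
  exact trace_re_nonneg (hA.mul_mul_conjTranspose_same _)

lemma posDef_conj {A B : Matrix n n ℂ} (hA : A.PosDef) (hB : IsUnit B.det) :
    (B * A * Bᴴ).PosDef := by
  refine Matrix.PosDef.of_dotProduct_mulVec_pos ?_ fun x hx => ?_
  · have : (B * A * Bᴴ)ᴴ = B * Aᴴ * Bᴴ := by
      simp [Matrix.conjTranspose_mul, Matrix.mul_assoc]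
    rw [Matrix.IsHermitian, this, hA.isHermitian.eq]
  · have hy : Bᴴ *ᵥ x ≠ 0 := by
      have hUnit : IsUnit Bᴴ := by
        rw [Matrix.isUnit_iff_isUnit_det, Matrix.det_conjTranspose]
        exact hB.star
      have hinj := Matrix.mulVec_injective_iff_isUnit.mpr hUnit
      intro h0
      exact hx (hinj (by simpa using h0))
    have := hA.dotProduct_mulVec_pos hy
    have hrw : star x ⬝ᵥ (B * A * Bᴴ) *ᵥ x = star (Bᴴ *ᵥ x) ⬝ᵥ A *ᵥ (Bᴴ *ᵥ x) := by
      rw [star_mulVec, conjTranspose_conjTranspose, ← Matrix.mulVec_mulVec,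
        ← Matrix.mulVec_mulVec, Matrix.dotProduct_mulVec]
    rw [hrw]
    exact this

lemma det_re_pos {A : Matrix n n ℂ} (hA : A.PosDef) : 0 < A.det.re := by
  have := hA.det_pos
  rw [Complex.lt_def] at this; exact this.1

lemma det_eq_re {A : Matrix n n ℂ} (hA : A.PosDef) : A.det = (A.det.re : ℂ) := by
  have := hA.det_pos
  rw [Complex.lt_def] at this
  exact Complex.ext rfl (by simpa using this.2.symm)

lemma trace_eq_sum_eigenvalues {A : Matrix n n ℂ} (hA : A.IsHermitian) :
    A.trace = ∑ i, (hA.eigenvalues i : ℂ) := by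
  conv_lhs => rw [hA.spectral_theorem, Unitary.conjStarAlgAut_apply]
  rw [Matrix.trace_mul_comm, ← Matrix.mul_assoc]
  have h1 : (star (hA.eigenvectorUnitary : Matrix n n ℂ)) *
      (hA.eigenvectorUnitary : Matrix n n ℂ) = 1 := by
    exact Unitary.coe_star_mul_self _
  rw [h1, Matrix.one_mul, Matrix.trace_diagonal]
  rfl

/-- Log-det inequality: for positive definite `A B`,
`log det A ≤ log det B + Tr(B⁻¹ A) - n`. -/
lemma logdet_le {A B : Matrix n n ℂ} (hA : A.PosDef) (hB : B.PosDef) :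
    Real.log A.det.re ≤ Real.log B.det.re + (B⁻¹ * A).trace.re - Fintype.card n := by
  set R := CFC.sqrt B with hRdef
  have hRpsd : R.PosSemidef := (CFC.sqrt_nonneg B).posSemidef
  have hRR : R * R = B := CFC.sqrt_mul_sqrt_self B hB.posSemidef.nonneg
  have hdetB : R.det * R.det = B.det := by rw [← Matrix.det_mul, hRR]
  have hRdet : IsUnit R.det := by
    have : B.det ≠ 0 := hB.det_pos.ne'
    rw [← hdetB] at this
    exact (IsUnit.mul_iff.mp (Ne.isUnit this)).1
  have hRinvdet : IsUnit R⁻¹.det := by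
    rwa [Matrix.det_nonsing_inv, isUnit_ringInverse]
  have hRH : R⁻¹ᴴ = R⁻¹ := (hRpsd.isHermitian.inv).eq
  set M := R⁻¹ * A * R⁻¹ with hMdef
  have hM : M.PosDef := by
    have := posDef_conj hA hRinvdet
    rwa [hRH] at this
  -- det A = det B * det M
  have hdetM : M.det = R⁻¹.det * A.det * R⁻¹.det := by
    rw [hMdef, Matrix.det_mul, Matrix.det_mul]
  have hdetRinv : R⁻¹.det = R.det⁻¹ := by
    rw [Matrix.det_nonsing_inv, Ring.inverse_eq_inv']
  have hdetA : A.det = B.det * M.det := by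
    have hR0 : R.det ≠ 0 := hRdet.ne_zero
    rw [hdetM, hdetRinv, ← hdetB]
    field_simp
  -- trace B⁻¹ A = trace M
  have htr : (B⁻¹ * A).trace = M.trace := by
    rw [← hRR, Matrix.mul_inv_rev, hMdef, Matrix.trace_mul_cycle R⁻¹ R⁻¹ A,
      Matrix.trace_mul_cycle A R⁻¹ R⁻¹]
  -- eigenvalues of M
  have hdetMre : M.det.re = ∏ i, hM.isHermitian.eigenvalues i := by
    rw [hM.isHermitian.det_eq_prod_eigenvalues]
    norm_cast
  have htrMre : M.trace.re = ∑ i, hM.isHermitian.eigenvalues i := by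
    rw [trace_eq_sum_eigenvalues hM.isHermitian]
    norm_cast
  have hlogM : Real.log M.det.re ≤ M.trace.re - Fintype.card n := by
    rw [hdetMre, htrMre]
    rw [Real.log_prod (fun i _ => (hM.eigenvalues_pos i).ne')]
    have : ∀ i ∈ Finset.univ, Real.log (hM.isHermitian.eigenvalues i) ≤
        hM.isHermitian.eigenvalues i - 1 :=
      fun i _ => Real.log_le_sub_one_of_pos (hM.eigenvalues_pos i)
    calc ∑ i, Real.log (hM.isHermitian.eigenvalues i)
        ≤ ∑ i, (hM.isHermitian.eigenvalues i - 1) := Finset.sum_le_sum this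
      _ = (∑ i, hM.isHermitian.eigenvalues i) - Fintype.card n := by
          rw [Finset.sum_sub_distrib]; simp [Finset.card_univ]
  have hdetAre : A.det.re = B.det.re * M.det.re := by
    rw [hdetA, det_eq_re hB, det_eq_re hM, ← Complex.ofReal_mul, Complex.ofReal_re,
      Complex.ofReal_re, Complex.ofReal_re]
  rw [hdetAre, Real.log_mul (det_re_pos hB).ne' (det_re_pos hM).ne', htr]
  linarith


lemma trace_conjTranspose_re (A : Matrix n n ℂ) : Aᴴ.trace.re = A.trace.re := by
  rw [Matrix.trace_conjTranspose]
  simp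

/-- Linearization of the matrix-fractional function (jointly convex). -/
lemma trace_quad_lower {X Xb : Matrix n n ℂ} (hX : X.PosDef) (hXb : Xb.PosDef)
    (A Ab : Matrix n p ℂ) :
    2 * (Abᴴ * Xb⁻¹ * A).trace.re - (Abᴴ * Xb⁻¹ * X * Xb⁻¹ * Ab).trace.re
      ≤ (Aᴴ * X⁻¹ * A).trace.re := by
  have hXdet : IsUnit X.det := hX.det_pos.ne'.isUnit
  have hXbH : Xb⁻¹ᴴ = Xb⁻¹ := (hXb.isHermitian.inv).eq
  have hXH : Xᴴ = X := hX.isHermitian.eq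
  set M := A - X * (Xb⁻¹ * Ab) with hMdef
  have hpsd : (Mᴴ * X⁻¹ * M).PosSemidef :=
    (hX.inv.posSemidef).conjTranspose_mul_mul_same M
  have hMT : Mᴴ = Aᴴ - Abᴴ * (Xb⁻¹ * X) := by
    simp [hMdef, Matrix.conjTranspose_sub, Matrix.conjTranspose_mul, hXbH, hXH,
      Matrix.mul_assoc]
  have hexp : Mᴴ * X⁻¹ * M =
      Aᴴ * X⁻¹ * A - Aᴴ * Xb⁻¹ * Ab - Abᴴ * Xb⁻¹ * A + Abᴴ * Xb⁻¹ * X * Xb⁻¹ * Ab := by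
    rw [hMT, hMdef]
    simp only [Matrix.sub_mul, Matrix.mul_sub, Matrix.mul_assoc,
      Matrix.nonsing_inv_mul_cancel_left _ _ hXdet,
      Matrix.mul_nonsing_inv_cancel_left _ _ hXdet]
    abel
  have h0 := trace_re_nonneg hpsd
  rw [hexp] at h0
  have hconj : (Aᴴ * Xb⁻¹ * Ab).trace.re = (Abᴴ * Xb⁻¹ * A).trace.re := by
    rw [← trace_conjTranspose_re (Aᴴ * Xb⁻¹ * Ab)]
    congr 2
    simp [Matrix.conjTranspose_mul, hXbH, Matrix.mul_assoc]
  simp only [Matrix.trace_sub, Matrix.trace_add, Complex.sub_re, Complex.add_re] at h0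
  rw [hconj] at h0
  linarith



lemma posSemidef_sum {ι : Type*} (s : Finset ι) (f : ι → Matrix n n ℂ)
    (h : ∀ i ∈ s, (f i).PosSemidef) : (∑ i ∈ s, f i).PosSemidef :=
  Finset.sum_induction f _ (fun _ _ ha hb => ha.add hb) Matrix.PosSemidef.zero h

lemma smul_one_posDef {σ : ℝ} (hσ : 0 < σ) :
    (((σ : ℂ)) • (1 : Matrix n n ℂ)).PosDef := by
  rw [Matrix.smul_one_eq_diagonal]
  rw [Matrix.posDef_diagonal_iff]
  intro i
  exact_mod_cast hσ

lemma trace_AAH_mul (A : Matrix n p ℂ) (X : Matrix n n ℂ) :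
    ((A * Aᴴ) * X).trace = (Aᴴ * X * A).trace := by
  rw [Matrix.mul_assoc, Matrix.trace_mul_comm]

lemma trace_mul_AAH (M : Matrix n n ℂ) (A : Matrix n p ℂ) :
    (M * (A * Aᴴ)).trace = (Aᴴ * M * A).trace := by
  rw [Matrix.trace_mul_comm, trace_AAH_mul]

lemma quad_shape (M1 M2 : Matrix n n ℂ) (A : Matrix n p ℂ) :
    (Aᴴ * (M1 * M2 * M1) * A).trace = (Aᴴ * M1 * M2 * M1 * A).trace := by
  simp only [Matrix.mul_assoc]

lemma trace_lin_eq {Xb : Matrix n n ℂ} (hXb : Xbᴴ = Xb) (A Ab : Matrix n p ℂ) :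
    (Xb * Ab * Aᴴ).trace.re = (Abᴴ * Xb * A).trace.re := by
  rw [Matrix.trace_mul_cycle, ← trace_conjTranspose_re (Aᴴ * Xb * Ab)]
  congr 2
  simp [Matrix.conjTranspose_mul, hXb, Matrix.mul_assoc]

lemma sqrt_le_linearization {t z : ℝ} (ht : 0 ≤ t) (hz : 0 < z) :
    Real.sqrt t ≤ (t + z) / (2 * Real.sqrt z) := by
  have hs : 0 < Real.sqrt z := Real.sqrt_pos.mpr hz
  rw [le_div_iff₀ (by positivity)]
  nlinarith [sq_nonneg (Real.sqrt t - Real.sqrt z), Real.sq_sqrt ht, Real.sq_sqrt hz.le,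
    Real.sqrt_nonneg t]

lemma ofReal_mul_re (r : ℝ) (z : ℂ) : ((r : ℂ) * z).re = r * z.re := by
  simp [Complex.mul_re]

lemma push_through {D : Matrix n n ℂ} (hD : D.PosDef) (G : Matrix n m ℂ) :
    (G * Gᴴ + D) * (D⁻¹ * G) = G * (1 + Gᴴ * D⁻¹ * G) := by
  have hDdet : IsUnit D.det := hD.det_pos.ne'.isUnit
  simp only [Matrix.add_mul, Matrix.mul_add, Matrix.mul_one, Matrix.mul_assoc,
    Matrix.mul_nonsing_inv_cancel_left _ _ hDdet]
  abel

lemma F_posDef {D : Matrix n n ℂ} (hD : D.PosDef) (G : Matrix n m ℂ) :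
    (1 + Gᴴ * D⁻¹ * G).PosDef :=
  Matrix.PosDef.add_posSemidef Matrix.PosDef.one
    ((hD.inv.posSemidef).conjTranspose_mul_mul_same G)

lemma X_posDef {D : Matrix n n ℂ} (hD : D.PosDef) (G : Matrix n m ℂ) :
    (G * Gᴴ + D).PosDef :=
  Matrix.PosDef.posSemidef_add (Matrix.posSemidef_self_mul_conjTranspose G) hD

lemma Xinv_G {D : Matrix n n ℂ} (hD : D.PosDef) (G : Matrix n m ℂ) :
    (G * Gᴴ + D)⁻¹ * G = D⁻¹ * G * (1 + Gᴴ * D⁻¹ * G)⁻¹ := by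
  have hXdet : IsUnit (G * Gᴴ + D).det := (X_posDef hD G).det_pos.ne'.isUnit
  have hFdet : IsUnit (1 + Gᴴ * D⁻¹ * G).det := (F_posDef hD G).det_pos.ne'.isUnit
  have h1 : (G * Gᴴ + D) * (D⁻¹ * G * (1 + Gᴴ * D⁻¹ * G)⁻¹) = G := by
    rw [← Matrix.mul_assoc, push_through hD G,
      Matrix.mul_nonsing_inv_cancel_right _ _ hFdet]
  calc (G * Gᴴ + D)⁻¹ * G
      = (G * Gᴴ + D)⁻¹ * ((G * Gᴴ + D) * (D⁻¹ * G * (1 + Gᴴ * D⁻¹ * G)⁻¹)) := by rw [h1]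
    _ = D⁻¹ * G * (1 + Gᴴ * D⁻¹ * G)⁻¹ := by
        rw [Matrix.nonsing_inv_mul_cancel_left _ _ hXdet]

lemma GXinvG {D : Matrix n n ℂ} (hD : D.PosDef) (G : Matrix n m ℂ) :
    Gᴴ * ((G * Gᴴ + D)⁻¹ * G) = 1 - (1 + Gᴴ * D⁻¹ * G)⁻¹ := by
  have hFdet : IsUnit (1 + Gᴴ * D⁻¹ * G).det := (F_posDef hD G).det_pos.ne'.isUnit
  rw [Xinv_G hD G, ← Matrix.mul_assoc, ← Matrix.mul_assoc]
  have h : (1 + Gᴴ * D⁻¹ * G) * (1 + Gᴴ * D⁻¹ * G)⁻¹ = 1 := Matrix.mul_nonsing_inv _ hFdet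
  calc Gᴴ * D⁻¹ * G * (1 + Gᴴ * D⁻¹ * G)⁻¹
      = (1 + Gᴴ * D⁻¹ * G) * (1 + Gᴴ * D⁻¹ * G)⁻¹
        - 1 * (1 + Gᴴ * D⁻¹ * G)⁻¹ := by
        rw [← Matrix.sub_mul]; congr 1; abel
    _ = 1 - (1 + Gᴴ * D⁻¹ * G)⁻¹ := by rw [h, Matrix.one_mul]

/-- Key logdet surrogate lower bound. -/
lemma logdet_surrogate {D Db : Matrix n n ℂ} (hD : D.PosDef) (hDb : Db.PosDef)
    (G Gb : Matrix n m ℂ) :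
    Real.log ((1 + Db⁻¹ * (Gb * Gbᴴ)).det.re) - (Db⁻¹ * (Gb * Gbᴴ)).trace.re
      + 2 * (Gbᴴ * Db⁻¹ * G).trace.re
      - ((Db⁻¹ - (Gb * Gbᴴ + Db)⁻¹) * (G * Gᴴ + D)).trace.re
      ≤ Real.log ((1 + D⁻¹ * (G * Gᴴ)).det.re) := by
  set F := 1 + Gᴴ * D⁻¹ * G with hFdef
  set Fb := 1 + Gbᴴ * Db⁻¹ * Gb with hFbdef
  set X := G * Gᴴ + D with hXdef
  set Xb := Gb * Gbᴴ + Db with hXbdef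
  have hFpd : F.PosDef := F_posDef hD G
  have hFbpd : Fb.PosDef := F_posDef hDb Gb
  have hXpd : X.PosDef := X_posDef hD G
  have hXbpd : Xb.PosDef := X_posDef hDb Gb
  have hFdet : IsUnit F.det := hFpd.det_pos.ne'.isUnit
  have hFbdet : IsUnit Fb.det := hFbpd.det_pos.ne'.isUnit
  have hXdet : IsUnit X.det := hXpd.det_pos.ne'.isUnit
  have hXbdet : IsUnit Xb.det := hXbpd.det_pos.ne'.isUnit
  have hDbdet : IsUnit Db.det := hDb.det_pos.ne'.isUnit
  -- determinant identities
  have hdet : (1 + D⁻¹ * (G * Gᴴ)).det = F.det := by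
    rw [show (1 : Matrix n n ℂ) + D⁻¹ * (G * Gᴴ) = 1 + (D⁻¹ * G) * Gᴴ by
      rw [Matrix.mul_assoc], Matrix.det_one_add_mul_comm, hFdef, Matrix.mul_assoc]
  have hdetb : (1 + Db⁻¹ * (Gb * Gbᴴ)).det = Fb.det := by
    rw [show (1 : Matrix n n ℂ) + Db⁻¹ * (Gb * Gbᴴ) = 1 + (Db⁻¹ * Gb) * Gbᴴ by
      rw [Matrix.mul_assoc], Matrix.det_one_add_mul_comm, hFbdef, Matrix.mul_assoc]
  set U := Xb⁻¹ * Gb with hUdef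
  have hU : U = Db⁻¹ * Gb * Fb⁻¹ := Xinv_G hDb Gb
  have hUFb : U * Fb = Db⁻¹ * Gb := by
    rw [hU, Matrix.nonsing_inv_mul_cancel_right _ _ hFbdet]
  have hFbH : Fbᴴ = Fb := hFbpd.isHermitian.eq
  have hXbinvH : Xb⁻¹ᴴ = Xb⁻¹ := hXbpd.isHermitian.inv.eq
  have hXinvH : X⁻¹ᴴ = X⁻¹ := hXpd.isHermitian.inv.eq
  have hXH : Xᴴ = X := hXpd.isHermitian.eq
  have hFbU : Fb * Uᴴ = Gbᴴ * Db⁻¹ := by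
    have := congrArg Matrix.conjTranspose hUFb
    simpa [Matrix.conjTranspose_mul, hFbH, hDb.isHermitian.inv.eq] using this
  set EU := 1 - Uᴴ * G - Gᴴ * U + Uᴴ * (X * U) with hEUdef
  -- EU - F⁻¹ is PSD
  have hEUF : EU - F⁻¹ = (U - X⁻¹ * G)ᴴ * X * (U - X⁻¹ * G) := by
    have hexp : (U - X⁻¹ * G)ᴴ * X * (U - X⁻¹ * G)
        = Uᴴ * (X * U) - Uᴴ * G - Gᴴ * U + Gᴴ * (X⁻¹ * G) := by
      simp only [Matrix.conjTranspose_sub, Matrix.conjTranspose_mul, hXinvH,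
        Matrix.sub_mul, Matrix.mul_sub, Matrix.mul_assoc,
        Matrix.nonsing_inv_mul_cancel_left _ _ hXdet,
        Matrix.mul_nonsing_inv_cancel_left _ _ hXdet]
      abel
    rw [hexp, hEUdef]
    rw [show Gᴴ * (X⁻¹ * G) = 1 - F⁻¹ from GXinvG hD G]
    abel
  have hEUpsd : (EU - F⁻¹).PosSemidef := by
    rw [hEUF]; exact hXpd.posSemidef.conjTranspose_mul_mul_same _
  -- logdet
  have hlogF := logdet_le hFpd.inv hFbpd.inv
  have hFFinv : ∀ {A : Matrix m m ℂ}, A.PosDef → IsUnit A.det → (A⁻¹).det.re = (A.det.re)⁻¹ := by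
    intro A hA hAdet
    rw [Matrix.det_nonsing_inv, Ring.inverse_eq_inv, det_eq_re hA]
    simp
  rw [hFFinv hFpd hFdet, hFFinv hFbpd hFbdet, Real.log_inv, Real.log_inv,
    Matrix.nonsing_inv_nonsing_inv _ hFbdet] at hlogF
  -- trace estimates
  have htrstep : (Fb * F⁻¹).trace.re ≤ (Fb * EU).trace.re := by
    have h1 : (Fb * EU).trace.re - (Fb * F⁻¹).trace.re = (Fb * (EU - F⁻¹)).trace.re := by
      rw [Matrix.mul_sub, Matrix.trace_sub, Complex.sub_re]
    have h2 := trace_mul_re_nonneg hFbpd.posSemidef hEUpsd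
    linarith
  -- compute (Fb * EU).trace.re
  have hUH : Uᴴ = Gbᴴ * Xb⁻¹ := by
    rw [hUdef]; simp [Matrix.conjTranspose_mul, hXbinvH]
  have hUFbU : U * Fb * Uᴴ = Db⁻¹ - Xb⁻¹ := by
    rw [hUFb, hUH]
    have hGbGb : Gb * Gbᴴ = Xb - Db := by rw [hXbdef]; abel
    calc Db⁻¹ * Gb * (Gbᴴ * Xb⁻¹) = Db⁻¹ * (Gb * Gbᴴ) * Xb⁻¹ := by
          simp only [Matrix.mul_assoc]
      _ = Db⁻¹ * (Xb - Db) * Xb⁻¹ := by rw [hGbGb]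
      _ = Db⁻¹ - Xb⁻¹ := by
          rw [Matrix.mul_sub, Matrix.sub_mul,
            Matrix.mul_nonsing_inv_cancel_right _ _ hXbdet,
            Matrix.nonsing_inv_mul _ hDbdet, Matrix.one_mul]
  have ht0 : Fb.trace = Fintype.card m + (Db⁻¹ * (Gb * Gbᴴ)).trace := by
    rw [hFbdef, Matrix.trace_add, Matrix.trace_one]
    congr 1
    rw [Matrix.mul_assoc, Matrix.trace_mul_comm, Matrix.mul_assoc]
  have ht1 : Fb * (Uᴴ * G) = Gbᴴ * Db⁻¹ * G := by
    rw [← Matrix.mul_assoc, hFbU]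
  have ht2 : (Fb * (Gᴴ * U)).trace.re = (Gbᴴ * Db⁻¹ * G).trace.re := by
    have e1 : (Fb * (Gᴴ * U)).trace = (U * (Fb * Gᴴ)).trace := by
      rw [← Matrix.mul_assoc, Matrix.trace_mul_comm, Matrix.mul_assoc]
    have e2 : U * (Fb * Gᴴ) = (Db⁻¹ * Gb) * Gᴴ := by
      rw [← Matrix.mul_assoc, ← hFbH]
      rw [show U * Fbᴴ = U * Fb from by rw [hFbH], hUFb]
    have e3 : ((Db⁻¹ * Gb) * Gᴴ).trace.re = (Gᴴ * (Db⁻¹ * Gb)).trace.re := by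
      rw [Matrix.trace_mul_comm]
    have e4 : (Gᴴ * (Db⁻¹ * Gb)).trace.re = (Gbᴴ * Db⁻¹ * G).trace.re := by
      rw [← trace_conjTranspose_re (Gᴴ * (Db⁻¹ * Gb))]
      congr 2
      simp [Matrix.conjTranspose_mul, hDb.isHermitian.inv.eq, Matrix.mul_assoc]
    rw [e1, e2, e3, e4]
  have ht3 : (Fb * (Uᴴ * (X * U))).trace = ((Db⁻¹ - Xb⁻¹) * X).trace := by
    have e1 : Fb * (Uᴴ * (X * U)) = (Fb * Uᴴ * X) * U := by
      simp only [Matrix.mul_assoc]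
    rw [e1, Matrix.trace_mul_comm]
    simp only [← Matrix.mul_assoc]
    rw [hUFbU]
  have hFbEU : (Fb * EU).trace.re = Fintype.card m + (Db⁻¹ * (Gb * Gbᴴ)).trace.re
      - 2 * (Gbᴴ * Db⁻¹ * G).trace.re + ((Db⁻¹ - Xb⁻¹) * X).trace.re := by
    rw [hEUdef]
    rw [Matrix.mul_add, Matrix.mul_sub, Matrix.mul_sub, Matrix.mul_one,
      Matrix.trace_add, Matrix.trace_sub, Matrix.trace_sub, ht1, ht3, ht0]
    rw [Complex.add_re, Complex.sub_re, Complex.sub_re, Complex.add_re]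
    have : (↑(Fintype.card m) : ℂ).re = (Fintype.card m : ℝ) := by norm_cast
    rw [this] at *
    have h2 := ht2
    push_cast
    push_cast at h2
    linarith
  rw [hdet, hdetb]
  have := htrstep
  linarith [hlogF, htrstep, hFbEU]


end RSMAAux

open RSMAAux

lemma Dcmat_decomp (σ2 : ℝ) (H : Fin L → Fin K → Fin L → Matrix (Fin Nu) (Fin NBS) ℂ)
    (Wc : Fin L → Matrix (Fin NBS) (Fin NBS) ℂ)
    (Wp : Fin L → Fin K → Matrix (Fin NBS) (Fin NBS) ℂ) (l : Fin L) (k : Fin K) :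
    Dcmat σ2 H Wc Wp l k = (σ2 : ℂ) • (1 : Matrix (Fin Nu) (Fin Nu) ℂ)
      + (∑ i : Fin L, ∑ j : Fin K, (H l k i * Wp i j) * (H l k i * Wp i j)ᴴ)
      + (∑ i ∈ Finset.univ.erase l, (H l k i * Wc i) * (H l k i * Wc i)ᴴ) := by
  have hC : ∀ i : Fin L, H l k i * Cmat Wc Wp i * (H l k i)ᴴ
      = (H l k i * Wc i) * (H l k i * Wc i)ᴴ
        + ∑ j : Fin K, (H l k i * Wp i j) * (H l k i * Wp i j)ᴴ := by
    intro i
    rw [Cmat, Matrix.mul_add, Matrix.add_mul, Matrix.mul_sum, Matrix.sum_mul]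
    congr 1
    · simp only [Matrix.conjTranspose_mul, Matrix.mul_assoc]
    · exact Finset.sum_congr rfl fun j _ => by
        simp only [Matrix.conjTranspose_mul, Matrix.mul_assoc]
  rw [Dcmat, Dmat, Smat]
  simp only [hC]
  rw [Finset.sum_add_distrib]
  rw [← Finset.sum_erase_add Finset.univ
      (fun i => ∑ j : Fin K, (H l k i * Wp i j) * (H l k i * Wp i j)ᴴ) (Finset.mem_univ l)]
  rw [← Finset.sum_erase_add Finset.univ
      (fun j => (H l k l * Wp l j) * (H l k l * Wp l j)ᴴ) (Finset.mem_univ k)]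
  abel

lemma Dcmat_posDef {σ2 : ℝ} (hσ : 0 < σ2)
    (H : Fin L → Fin K → Fin L → Matrix (Fin Nu) (Fin NBS) ℂ)
    (Wc : Fin L → Matrix (Fin NBS) (Fin NBS) ℂ)
    (Wp : Fin L → Fin K → Matrix (Fin NBS) (Fin NBS) ℂ) (l : Fin L) (k : Fin K) :
    (Dcmat σ2 H Wc Wp l k).PosDef := by
  rw [Dcmat_decomp]
  refine (Matrix.PosDef.add_posSemidef ?_ ?_).add_posSemidef ?_
  · exact smul_one_posDef hσ
  · exact posSemidef_sum _ _ fun i _ => posSemidef_sum _ _ fun j _ =>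
      Matrix.posSemidef_self_mul_conjTranspose _
  · exact posSemidef_sum _ _ fun i _ => Matrix.posSemidef_self_mul_conjTranspose _


/-- **Corollary 1, inequality (32) of the paper.** With the precoders fixed to the
reference precoders `{W̄} = (Wcb, Wpb)` and reference channels `{H̄} = Hb`, assuming
`σ² > 0`, `n > 0`, `q_c ≥ 0`, `N_u ≤ N_BS` and `ζ̄_{c,lk} > 0` (barred quantities
evaluated at `(Hb, W̄)`), for every choice of channel matrices `H` (in particular
those induced by any feasible RIS coefficients), with the rate, `S_{c,lk}` and
`D_{c,lk}` evaluated at `(H, W̄)`: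
`r_{c,lk} ≥ a_{c,lk} + 2 Σ_{ij} Re Tr(A_{c,lk,ij} W̄_{ij}ᴴ H_{lk,i}ᴴ)
  + 2 Σ_{i} Re Tr(A_{c,lk,i} W̄_{i}ᴴ H_{lk,i}ᴴ)
  − Re Tr(B_{c,lk} (H_{lk,l}W̄_{l}W̄_{l}ᴴH_{lk,l}ᴴ + D_{c,lk}))`. -/
theorem common_rate_surrogate_channels {L K Nu NBS : ℕ}
    (σ2 nn qc : ℝ) (hσ : 0 < σ2) (hn : 0 < nn) (hqc : 0 ≤ qc) (hNu : Nu ≤ NBS)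
    (Hb : Fin L → Fin K → Fin L → Matrix (Fin Nu) (Fin NBS) ℂ)
    (Wcb : Fin L → Matrix (Fin NBS) (Fin NBS) ℂ)
    (Wpb : Fin L → Fin K → Matrix (Fin NBS) (Fin NBS) ℂ)
    (l : Fin L) (k : Fin K)
    (hζ : 0 < zetaC σ2 Hb Wcb Wpb l k)
    (H : Fin L → Fin K → Fin L → Matrix (Fin Nu) (Fin NBS) ℂ) :
    rcRate σ2 nn qc H Wcb Wpb l k ≥
      aC σ2 nn qc Hb Wcb Wpb l k
        + 2 * ∑ i : Fin L, ∑ j : Fin K,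
            ((AcIJ σ2 nn qc Hb Wcb Wpb l k i j * (Wpb i j)ᴴ * (H l k i)ᴴ).trace).re
        + 2 * ∑ i : Fin L,
            ((AcI σ2 nn qc Hb Wcb Wpb l k i * (Wcb i)ᴴ * (H l k i)ᴴ).trace).re
        - ((Bc σ2 nn qc Hb Wcb Wpb l k *
            (Scmat H Wcb l k + Dcmat σ2 H Wcb Wpb l k)).trace).re := by
  classical
  have hDpd : (Dcmat σ2 H Wcb Wpb l k).PosDef := Dcmat_posDef hσ H Wcb Wpb l k
  have hDbpd : (Dcmat σ2 Hb Wcb Wpb l k).PosDef := Dcmat_posDef hσ Hb Wcb Wpb l k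
  rw [ge_iff_le]
  simp only [rcRate, aC, AcIJ, AcI, Bc]
  set Sc := Scmat H Wcb l k with hSc
  set Scb := Scmat Hb Wcb l k with hScb
  set Dc := Dcmat σ2 H Wcb Wpb l k with hDc
  set Dcb := Dcmat σ2 Hb Wcb Wpb l k with hDcb
  set Z := zetaC σ2 H Wcb Wpb l k with hZ
  set Zb := zetaC σ2 Hb Wcb Wpb l k with hZb
  set c := qc / Real.sqrt (nn * Zb) with hcdef
  set XI := (Sc + Dc)⁻¹ with hXI
  set XIb := (Scb + Dcb)⁻¹ with hXIb
  -- basic facts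
  have hScE : Sc = (H l k l * Wcb l) * (H l k l * Wcb l)ᴴ := by rw [hSc, Scmat]
  have hScbE : Scb = (Hb l k l * Wcb l) * (Hb l k l * Wcb l)ᴴ := by rw [hScb, Scmat]
  have hXpd : (Sc + Dc).PosDef := by rw [hScE]; exact X_posDef hDpd _
  have hXbpd : (Scb + Dcb).PosDef := by rw [hScbE]; exact X_posDef hDbpd _
  have hXdet : IsUnit (Sc + Dc).det := hXpd.det_pos.ne'.isUnit
  have hXIpsd : XI.PosSemidef := by rw [hXI]; exact hXpd.inv.posSemidef
  have hXIbH : XIbᴴ = XIb := by rw [hXIb]; exact hXbpd.isHermitian.inv.eq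
  have hDcbiH : (Dcb⁻¹)ᴴ = Dcb⁻¹ := hDbpd.isHermitian.inv.eq
  -- the logdet surrogate
  have hlog := logdet_surrogate hDpd hDbpd (H l k l * Wcb l) (Hb l k l * Wcb l)
  rw [← hScE, ← hScbE, ← hXIb] at hlog
  -- transform the AcIJ sum
  have hterm1 : ∀ (i : Fin L) (j : Fin K),
      ((c : ℂ) • (XIb * Hb l k i * Wpb i j) * (Wpb i j)ᴴ * (H l k i)ᴴ).trace.re
      = c * ((Hb l k i * Wpb i j)ᴴ * XIb * (H l k i * Wpb i j)).trace.re := by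
    intro i j
    have e0 : (c : ℂ) • (XIb * Hb l k i * Wpb i j) * (Wpb i j)ᴴ * (H l k i)ᴴ
        = (c : ℂ) • (XIb * (Hb l k i * Wpb i j) * (H l k i * Wpb i j)ᴴ) := by
      simp only [Matrix.smul_mul, Matrix.conjTranspose_mul, Matrix.mul_assoc]
    rw [e0, Matrix.trace_smul, smul_eq_mul, ofReal_mul_re,
      trace_lin_eq hXIbH (H l k i * Wpb i j) (Hb l k i * Wpb i j)]
  simp only [hterm1]
  simp only [← Finset.mul_sum]
  -- transform the AcI sum
  have hT2eq : (∑ i : Fin L,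
      ((if i = l then Dcb⁻¹ * Hb l k l * Wcb l else (c : ℂ) • (XIb * Hb l k i * Wcb i))
        * (Wcb i)ᴴ * (H l k i)ᴴ).trace.re)
      = ((Hb l k l * Wcb l)ᴴ * Dcb⁻¹ * (H l k l * Wcb l)).trace.re
        + c * ∑ i ∈ Finset.univ.erase l,
            ((Hb l k i * Wcb i)ᴴ * XIb * (H l k i * Wcb i)).trace.re := by
    rw [← Finset.sum_erase_add Finset.univ _ (Finset.mem_univ l)]
    rw [add_comm]
    congr 1
    · rw [if_pos rfl]
      have e0 : Dcb⁻¹ * Hb l k l * Wcb l * (Wcb l)ᴴ * (H l k l)ᴴ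
          = Dcb⁻¹ * (Hb l k l * Wcb l) * (H l k l * Wcb l)ᴴ := by
        simp only [Matrix.conjTranspose_mul, Matrix.mul_assoc]
      rw [e0, trace_lin_eq hDcbiH (H l k l * Wcb l) (Hb l k l * Wcb l)]
    · rw [Finset.mul_sum]
      refine Finset.sum_congr rfl fun i hi => ?_
      rw [if_neg (Finset.mem_erase.mp hi).1]
      have e0 : (c : ℂ) • (XIb * Hb l k i * Wcb i) * (Wcb i)ᴴ * (H l k i)ᴴ
          = (c : ℂ) • (XIb * (Hb l k i * Wcb i) * (H l k i * Wcb i)ᴴ) := by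
        simp only [Matrix.smul_mul, Matrix.conjTranspose_mul, Matrix.mul_assoc]
      rw [e0, Matrix.trace_smul, smul_eq_mul, ofReal_mul_re,
        trace_lin_eq hXIbH (H l k i * Wcb i) (Hb l k i * Wcb i)]
  rw [hT2eq]
  -- transform the Bc term
  have hTBeq : ((Dcb⁻¹ - XIb + (c : ℂ) • (XIb * Dcb * XIb)) * (Sc + Dc)).trace.re
      = ((Dcb⁻¹ - XIb) * (Sc + Dc)).trace.re
        + c * ((XIb * Dcb * XIb) * (Sc + Dc)).trace.re := by
    rw [Matrix.add_mul, Matrix.trace_add, Complex.add_re, Matrix.smul_mul,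
      Matrix.trace_smul, smul_eq_mul, ofReal_mul_re]
  rw [hTBeq]
  -- abbreviations for the four sums
  set LA := ∑ i : Fin L, ∑ j : Fin K,
      ((Hb l k i * Wpb i j)ᴴ * XIb * (H l k i * Wpb i j)).trace.re with hLA
  set LB := ∑ i ∈ Finset.univ.erase l,
      ((Hb l k i * Wcb i)ᴴ * XIb * (H l k i * Wcb i)).trace.re with hLB
  set TQ := ((XIb * Dcb * XIb) * (Sc + Dc)).trace.re with hTQ
  -- ζ at the variable point
  have hSpsd : Sc.PosSemidef := by
    rw [hScE]; exact Matrix.posSemidef_self_mul_conjTranspose _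
  have hZdef : Z = 2 * ((Sc * XI).trace).re := by
    rw [hZ, zetaC, ← hSc, ← hDc, ← hXI]
  have hZ0 : 0 ≤ Z := by
    have := trace_mul_re_nonneg hSpsd hXIpsd
    rw [hZdef]; linarith
  have htr1 : ((Sc + Dc) * XI).trace = (Nu : ℂ) := by
    rw [hXI, Matrix.mul_nonsing_inv _ hXdet, Matrix.trace_one]
    norm_num
  have hsplit : (Sc * XI).trace.re + (Dc * XI).trace.re = (Nu : ℝ) := by
    have h' : (Sc * XI).trace + (Dc * XI).trace = (Nu : ℂ) := by
      rw [← Matrix.trace_add, ← Matrix.add_mul, htr1]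
    have := congrArg Complex.re h'
    simpa using this
  -- decomposition of Dc and Dcb
  have hDcdec : Dc = (σ2 : ℂ) • (1 : Matrix (Fin Nu) (Fin Nu) ℂ)
      + (∑ i : Fin L, ∑ j : Fin K, (H l k i * Wpb i j) * (H l k i * Wpb i j)ᴴ)
      + (∑ i ∈ Finset.univ.erase l, (H l k i * Wcb i) * (H l k i * Wcb i)ᴴ) := by
    rw [hDc]; exact Dcmat_decomp σ2 H Wcb Wpb l k
  have hDcbdec : Dcb = (σ2 : ℂ) • (1 : Matrix (Fin Nu) (Fin Nu) ℂ)
      + (∑ i : Fin L, ∑ j : Fin K, (Hb l k i * Wpb i j) * (Hb l k i * Wpb i j)ᴴ)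
      + (∑ i ∈ Finset.univ.erase l, (Hb l k i * Wcb i) * (Hb l k i * Wcb i)ᴴ) := by
    rw [hDcb]; exact Dcmat_decomp σ2 Hb Wcb Wpb l k
  -- trace of Dc · XI
  have hTrDeq : (Dc * XI).trace.re = σ2 * XI.trace.re
      + ((∑ i : Fin L, ∑ j : Fin K,
            ((H l k i * Wpb i j)ᴴ * XI * (H l k i * Wpb i j)).trace.re)
        + ∑ i ∈ Finset.univ.erase l,
            ((H l k i * Wcb i)ᴴ * XI * (H l k i * Wcb i)).trace.re) := by
    nth_rewrite 1 [hDcdec]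
    rw [Matrix.add_mul, Matrix.add_mul, Matrix.smul_mul, Matrix.one_mul]
    simp only [Finset.sum_mul]
    rw [Matrix.trace_add, Matrix.trace_add, Matrix.trace_smul]
    simp only [Matrix.trace_sum, trace_AAH_mul]
    simp only [Complex.add_re, Complex.re_sum, smul_eq_mul, ofReal_mul_re]
    ring
  -- pointwise lower bound
  have hterm : ∀ (A Ab : Matrix (Fin Nu) (Fin NBS) ℂ),
      2 * (Abᴴ * XIb * A).trace.re - (Abᴴ * XIb * (Sc + Dc) * XIb * Ab).trace.re
        ≤ (Aᴴ * XI * A).trace.re := by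
    intro A Ab
    have h := trace_quad_lower hXpd hXbpd A Ab
    rw [← hXI, ← hXIb] at h
    exact h
  have hsumA : ∑ i : Fin L, ∑ j : Fin K,
      (2 * ((Hb l k i * Wpb i j)ᴴ * XIb * (H l k i * Wpb i j)).trace.re
        - ((Hb l k i * Wpb i j)ᴴ * XIb * (Sc + Dc) * XIb * (Hb l k i * Wpb i j)).trace.re)
      ≤ ∑ i : Fin L, ∑ j : Fin K,
          ((H l k i * Wpb i j)ᴴ * XI * (H l k i * Wpb i j)).trace.re :=
    Finset.sum_le_sum fun i _ => Finset.sum_le_sum fun j _ => hterm _ _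
  have hsumB : ∑ i ∈ Finset.univ.erase l,
      (2 * ((Hb l k i * Wcb i)ᴴ * XIb * (H l k i * Wcb i)).trace.re
        - ((Hb l k i * Wcb i)ᴴ * XIb * (Sc + Dc) * XIb * (Hb l k i * Wcb i)).trace.re)
      ≤ ∑ i ∈ Finset.univ.erase l,
          ((H l k i * Wcb i)ᴴ * XI * (H l k i * Wcb i)).trace.re :=
    Finset.sum_le_sum fun i _ => hterm _ _
  simp only [Finset.sum_sub_distrib, ← Finset.mul_sum] at hsumA hsumB
  -- quadratic reassembly
  have hM0psd : (XIb * (Sc + Dc) * XIb).PosSemidef := by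
    have h := hXpd.posSemidef.mul_mul_conjTranspose_same XIb
    rwa [hXIbH] at h
  have hcyc : ((XIb * Dcb * XIb) * (Sc + Dc)).trace = ((XIb * (Sc + Dc) * XIb) * Dcb).trace := by
    rw [Matrix.mul_assoc, Matrix.trace_mul_comm, ← Matrix.mul_assoc]
  have hquadeq : TQ = σ2 * (XIb * (Sc + Dc) * XIb).trace.re
      + ((∑ i : Fin L, ∑ j : Fin K,
            ((Hb l k i * Wpb i j)ᴴ * XIb * (Sc + Dc) * XIb * (Hb l k i * Wpb i j)).trace.re)
        + ∑ i ∈ Finset.univ.erase l,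
            ((Hb l k i * Wcb i)ᴴ * XIb * (Sc + Dc) * XIb * (Hb l k i * Wcb i)).trace.re) := by
    rw [hTQ]
    have h := congrArg Complex.re hcyc
    rw [h]
    nth_rewrite 1 [hDcbdec]
    rw [Matrix.mul_add, Matrix.mul_add, Matrix.mul_smul, Matrix.mul_one]
    simp only [Matrix.mul_sum]
    rw [Matrix.trace_add, Matrix.trace_add, Matrix.trace_smul]
    simp only [Matrix.trace_sum, trace_mul_AAH, quad_shape]
    simp only [Complex.add_re, Complex.re_sum, smul_eq_mul, ofReal_mul_re]
    ring
  have hσq : 0 ≤ σ2 * (XIb * (Sc + Dc) * XIb).trace.re :=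
    mul_nonneg hσ.le (trace_re_nonneg hM0psd)
  have hσ1 : 0 ≤ σ2 * XI.trace.re := mul_nonneg hσ.le (trace_re_nonneg hXIpsd)
  -- ζ upper bound
  have hZle : Z ≤ 2 * (Nu : ℝ) - 4 * (LA + LB) + 2 * TQ := by
    rw [hZdef]
    have h1 : (Dc * XI).trace.re ≥ 2 * LA + 2 * LB - TQ := by
      rw [hTrDeq]
      rw [hquadeq] at *
      linarith [hsumA, hsumB]
    linarith [hsplit]
  -- square-root estimate
  have hsn : 0 < Real.sqrt nn := Real.sqrt_pos.mpr hn
  have hsz : 0 < Real.sqrt Zb := Real.sqrt_pos.mpr hζ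
  set s := Real.sqrt Zb with hsdef
  have hss : s * s = Zb := Real.mul_self_sqrt hζ.le
  have hc2 : c = qc / (Real.sqrt nn * s) := by rw [hcdef, Real.sqrt_mul hn.le]
  have hkey2 : qc * Real.sqrt (Z / nn)
      ≤ qc / (2 * Real.sqrt nn) * (s + 2 * (Nu : ℝ) / s)
        - 2 * (c * LA) - 2 * (c * LB) + c * TQ := by
    have h1 : Real.sqrt (Z / nn) = Real.sqrt Z / Real.sqrt nn := Real.sqrt_div hZ0 nn
    have h2 : Real.sqrt Z ≤ (Z + Zb) / (2 * s) := sqrt_le_linearization hZ0 hζ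
    have h3 : qc * Real.sqrt (Z / nn)
        ≤ qc * (((2 * (Nu : ℝ) - 4 * (LA + LB) + 2 * TQ) + Zb) / (2 * s)) / Real.sqrt nn := by
      rw [h1]
      have h4 : Real.sqrt Z / Real.sqrt nn ≤ ((Z + Zb) / (2 * s)) / Real.sqrt nn := by gcongr
      have h5 : ((Z + Zb) / (2 * s)) / Real.sqrt nn
          ≤ (((2 * (Nu : ℝ) - 4 * (LA + LB) + 2 * TQ) + Zb) / (2 * s)) / Real.sqrt nn := by
        gcongr
      calc qc * (Real.sqrt Z / Real.sqrt nn)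
          ≤ qc * (((Z + Zb) / (2 * s)) / Real.sqrt nn) := mul_le_mul_of_nonneg_left h4 hqc
        _ ≤ qc * ((((2 * (Nu : ℝ) - 4 * (LA + LB) + 2 * TQ) + Zb) / (2 * s)) / Real.sqrt nn) :=
            mul_le_mul_of_nonneg_left h5 hqc
        _ = qc * (((2 * (Nu : ℝ) - 4 * (LA + LB) + 2 * TQ) + Zb) / (2 * s)) / Real.sqrt nn := by
            ring
    have h6 : qc * (((2 * (Nu : ℝ) - 4 * (LA + LB) + 2 * TQ) + Zb) / (2 * s)) / Real.sqrt nn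
        = qc / (2 * Real.sqrt nn) * (s + 2 * (Nu : ℝ) / s)
          - 2 * (c * LA) - 2 * (c * LB) + c * TQ := by
      rw [hc2, ← hss]
      field_simp
      ring
    linarith [h3, h6.le, h6.ge]
  linarith [hlog, hkey2]



end RSMA
end
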